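/- Let p and q be prime numbers with p ≥ 5 and q ≥ 5. Then the equation X³ − 3X²Y − 9XY² + 3Y³ + 6pq·Z³ = 0 has no solution (X, Y, Z) ∈ ℚ₂³ with (X, Y, Z) ≠ (0, 0, 0). -/

import Mathlib

private lemma norm_two2 : ‖(2:ℤ_[2])‖ = (2:ℝ)⁻¹ := by
  have := @PadicInt.norm_p 2 _
  exact_mod_cast this

private lemma odd_norm_one2 (k : ℤ) (hk : ¬ (2:ℤ) ∣ k) : ‖((k:ℤ_[2]))‖ = 1 := by
  refine le_antisymm (PadicInt.norm_le_one _) (not_lt.1 fun hlt => hk ?_)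
  exact (PadicInt.norm_int_lt_one_iff_dvd k).1 hlt

private lemma small_half {x : ℤ_[2]} (h : ‖x‖ < 1) : ‖x‖ ≤ (2:ℝ)⁻¹ := by
  obtain ⟨a, rfl⟩ := (PadicInt.norm_lt_one_iff_dvd x).1 h
  have e : ((2:ℕ):ℤ_[2]) = 2 := by push_cast; ring
  rw [e, norm_mul, norm_two2]
  nlinarith [PadicInt.norm_le_one a, norm_nonneg a]

private lemma prod_small {u s : ℤ_[2]} {r : ℝ} (hs : ‖s‖ ≤ r) : ‖u*s‖ ≤ r := by
  rw [norm_mul]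
  calc ‖u‖ * ‖s‖ ≤ 1 * r :=
        mul_le_mul (PadicInt.norm_le_one u) hs (norm_nonneg s) one_pos.le
    _ = r := one_mul r

private lemma nonarch4 {a b c d : ℤ_[2]} {r : ℝ}
    (h1 : ‖a‖ ≤ r) (h2 : ‖b‖ ≤ r) (h3 : ‖c‖ ≤ r) (h4 : ‖d‖ ≤ r) :
    ‖a + b + c + d‖ ≤ r := by
  refine le_trans (PadicInt.nonarchimedean _ _) (max_le ?_ h4)
  refine le_trans (PadicInt.nonarchimedean _ _) (max_le ?_ h3)
  exact le_trans (PadicInt.nonarchimedean _ _) (max_le h1 h2)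

private lemma toZMod_ne_zero_of_norm_one {x : ℤ_[2]} (h : ‖x‖ = 1) :
    PadicInt.toZMod x ≠ 0 := by
  intro h0
  have hx : x ∈ IsLocalRing.maximalIdeal ℤ_[2] := by
    rw [← PadicInt.ker_toZMod]; exact h0
  rw [IsLocalRing.mem_maximalIdeal, PadicInt.mem_nonunits] at hx
  linarith

private lemma norm_one_of_toZMod_ne_zero {x : ℤ_[2]} (h : PadicInt.toZMod x ≠ 0) :
    ‖x‖ = 1 := by
  refine le_antisymm (PadicInt.norm_le_one _) (not_lt.1 fun hlt => h ?_)
  have hx : x ∈ IsLocalRing.maximalIdeal ℤ_[2] := by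
    rw [IsLocalRing.mem_maximalIdeal, PadicInt.mem_nonunits]; exact hlt
  rw [← PadicInt.ker_toZMod] at hx
  exact hx

private lemma small_of_toZMod_zero {x : ℤ_[2]} (h : PadicInt.toZMod x = 0) :
    ‖x‖ < 1 := by
  have hx : x ∈ IsLocalRing.maximalIdeal ℤ_[2] := by
    rw [← PadicInt.ker_toZMod]; exact h
  rw [IsLocalRing.mem_maximalIdeal, PadicInt.mem_nonunits] at hx
  exact hx

private lemma key2adic (c x y z : ℤ_[2]) (hc : ‖c‖ = 1)
    (hmax : ‖x‖ = 1 ∨ ‖y‖ = 1 ∨ ‖z‖ = 1)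
    (heq : x^3 - 3*x^2*y - 9*x*y^2 + 3*y^3 + 2*c*z^3 = 0) : False := by
  have h3 : ‖(3:ℤ_[2])‖ = 1 := by
    have := odd_norm_one2 3 (by decide); exact_mod_cast this
  by_cases hx : ‖x‖ = 1
  · by_cases hy : ‖y‖ = 1
    · -- both units
      have hdx := toZMod_ne_zero_of_norm_one hx
      have hdy := toZMod_ne_zero_of_norm_one hy
      have h01 : ∀ s : ZMod 2, s ≠ 0 → s = 1 := by decide
      have hxy : PadicInt.toZMod (x - y) = 0 := by
        rw [map_sub, h01 _ hdx, h01 _ hdy, sub_self]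
      obtain ⟨t, ht⟩ := (PadicInt.norm_lt_one_iff_dvd (x - y)).1 (small_of_toZMod_zero hxy)
      have hxt : x = y + 2*t := by linear_combination ht
      set u : ℤ_[2] := t^3 - 3*y^2*t - y^3 with hu_def
      have hFu : x^3 - 3*x^2*y - 9*x*y^2 + 3*y^3 = 8*u := by
        rw [hxt, hu_def]; ring
      have hu1 : ‖u‖ = 1 := by
        apply norm_one_of_toZMod_ne_zero
        have : PadicInt.toZMod u
            = (PadicInt.toZMod t)^3 - 3*(PadicInt.toZMod y)^2*(PadicInt.toZMod t)
              - (PadicInt.toZMod y)^3 := by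
          rw [hu_def]; ring_nf
          simp [map_sub, map_mul, map_pow, map_ofNat]
        rw [this, h01 _ hdy]
        have hne : ∀ s : ZMod 2, s^3 - 3*1^2*s - 1^3 ≠ 0 := by decide
        exact hne _
      have hzz : 2*c*z^3 = (-u)*8 := by linear_combination heq - hFu
      have hn8 : ‖(8:ℤ_[2])‖ = ((2:ℝ)⁻¹)^3 := by
        have : (8:ℤ_[2]) = 2^3 := by norm_num
        rw [this, norm_pow, norm_two2]
      have hl : ‖2*c*z^3‖ = (2:ℝ)⁻¹ * ‖z‖^3 := by
        rw [norm_mul, norm_mul, norm_pow, norm_two2, hc, mul_one]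
      have hr : ‖(-u)*8‖ = ((2:ℝ)⁻¹)^3 := by
        rw [norm_mul, norm_neg, hu1, hn8, one_mul]
      have hz3 : ‖z‖^3 = (4:ℝ)⁻¹ := by
        have h' := congrArg norm hzz
        rw [hl, hr] at h'
        nlinarith [h']
      have hz0 : z ≠ 0 := by
        intro h0; rw [h0, norm_zero] at hz3; norm_num at hz3
      have hval : ‖z‖ = (2:ℝ) ^ (-(z.valuation:ℤ)) := by
        exact_mod_cast PadicInt.norm_eq_zpow_neg_valuation hz0
      rw [hval, ← zpow_natCast ((2:ℝ) ^ (-(z.valuation:ℤ))) 3, ← zpow_mul] at hz3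
      have h4 : (4:ℝ)⁻¹ = (2:ℝ) ^ (-2 : ℤ) := by norm_num
      rw [h4] at hz3
      have hinj : -(z.valuation:ℤ) * (3:ℕ) = -2 := by
        have hmono : StrictMono (fun n : ℤ => (2:ℝ) ^ n) :=
          zpow_right_strictMono₀ (by norm_num)
        exact hmono.injective hz3
      omega
    · -- x unit, y small
      have hy' : ‖y‖ ≤ (2:ℝ)⁻¹ := small_half (lt_of_le_of_ne (PadicInt.norm_le_one y) hy)
      have h1 : x^3 = (3*x^2)*y + (9*x*y)*y + (-(3*y*y))*y + (-(c*z^3))*2 := by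
        linear_combination heq
      have hl : ‖x^3‖ = 1 := by rw [norm_pow, hx, one_pow]
      have hr : ‖(3*x^2)*y + (9*x*y)*y + (-(3*y*y))*y + (-(c*z^3))*2‖ ≤ (2:ℝ)⁻¹ :=
        nonarch4 (prod_small hy') (prod_small hy') (prod_small hy')
          (prod_small (le_of_eq norm_two2))
      rw [h1, ] at hl
      rw [hl] at hr
      norm_num at hr
  · by_cases hy : ‖y‖ = 1
    · -- y unit, x small
      have hx' : ‖x‖ ≤ (2:ℝ)⁻¹ := small_half (lt_of_le_of_ne (PadicInt.norm_le_one x) hx)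
      have h1 : 3*y^3 = (-(x*x))*x + (3*x*y)*x + (9*y*y)*x + (-(c*z^3))*2 := by
        linear_combination heq
      have hl : ‖3*y^3‖ = 1 := by rw [norm_mul, norm_pow, h3, hy, one_pow, mul_one]
      have hr : ‖(-(x*x))*x + (3*x*y)*x + (9*y*y)*x + (-(c*z^3))*2‖ ≤ (2:ℝ)⁻¹ :=
        nonarch4 (prod_small hx') (prod_small hx') (prod_small hx')
          (prod_small (le_of_eq norm_two2))
      rw [h1] at hl
      rw [hl] at hr
      norm_num at hr
    · -- x, y small, z unit
      have hz : ‖z‖ = 1 := by tauto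
      have hx' : ‖x‖ ≤ (2:ℝ)⁻¹ := small_half (lt_of_le_of_ne (PadicInt.norm_le_one x) hx)
      have hy' : ‖y‖ ≤ (2:ℝ)⁻¹ := small_half (lt_of_le_of_ne (PadicInt.norm_le_one y) hy)
      obtain ⟨a, ha⟩ := (PadicInt.norm_lt_one_iff_dvd x).1 (lt_of_le_of_ne (PadicInt.norm_le_one x) hx)
      obtain ⟨b, hb⟩ := (PadicInt.norm_lt_one_iff_dvd y).1 (lt_of_le_of_ne (PadicInt.norm_le_one y) hy)
      have hzz : 2*c*z^3 = (-(a^3 - 3*a^2*b - 9*a*b^2 + 3*b^3))*8 := by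
        rw [ha, hb] at heq; linear_combination heq
      have hl : ‖2*c*z^3‖ = (2:ℝ)⁻¹ := by
        rw [norm_mul, norm_mul, norm_pow, norm_two2, hc, hz]; norm_num
      have hn8 : ‖(8:ℤ_[2])‖ ≤ (8:ℝ)⁻¹ := by
        have : (8:ℤ_[2]) = 2^3 := by norm_num
        rw [this, norm_pow, norm_two2]; norm_num
      have hr : ‖(-(a^3 - 3*a^2*b - 9*a*b^2 + 3*b^3))*8‖ ≤ (8:ℝ)⁻¹ := prod_small hn8
      rw [← hzz, hl] at hr
      norm_num at hr

theorem stmt10 (p q : ℕ) (hp : p.Prime) (hq : q.Prime) (hp5 : 5 ≤ p) (hq5 : 5 ≤ q) :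
    ¬∃ X Y Z : ℚ_[2], (X, Y, Z) ≠ (0, 0, 0) ∧
      X ^ 3 - 3 * X ^ 2 * Y - 9 * X * Y ^ 2 + 3 * Y ^ 3
        + 6 * (p : ℚ_[2]) * (q : ℚ_[2]) * Z ^ 3 = 0 := by
  rintro ⟨X, Y, Z, hne, heq⟩
  -- choose w of maximal norm
  obtain ⟨w, hXw, hYw, hZw, hw_eq⟩ : ∃ w : ℚ_[2],
      ‖X‖ ≤ ‖w‖ ∧ ‖Y‖ ≤ ‖w‖ ∧ ‖Z‖ ≤ ‖w‖ ∧ (w = X ∨ w = Y ∨ w = Z) := by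
    rcases le_total ‖X‖ ‖Y‖ with h1 | h1 <;> rcases le_total ‖Y‖ ‖Z‖ with h2 | h2 <;>
      rcases le_total ‖X‖ ‖Z‖ with h3 | h3
    · exact ⟨Z, h3, h2, le_rfl, Or.inr (Or.inr rfl)⟩
    · exact ⟨Z, h1.trans h2, h2, le_rfl, Or.inr (Or.inr rfl)⟩
    · exact ⟨Y, h1, le_rfl, h2, Or.inr (Or.inl rfl)⟩
    · exact ⟨Y, h1, le_rfl, h2, Or.inr (Or.inl rfl)⟩
    · exact ⟨Z, h3, h2, le_rfl, Or.inr (Or.inr rfl)⟩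
    · exact ⟨X, le_rfl, h1, h3, Or.inl rfl⟩
    · exact ⟨X, le_rfl, h1, h2.trans h1, Or.inl rfl⟩
    · exact ⟨X, le_rfl, h1, h3, Or.inl rfl⟩
  have hw0 : w ≠ 0 := by
    rintro rfl
    simp only [norm_zero, norm_le_zero_iff] at hXw hYw hZw
    exact hne (by simp [hXw, hYw, hZw])
  set c : ℤ_[2] := ((3*p*q : ℕ) : ℤ_[2]) with hc_def
  have hc : ‖c‖ = 1 := by
    have hodd : ¬ (2:ℤ) ∣ ((3*p*q : ℕ) : ℤ) := by
      have h1 : Odd p := hp.odd_of_ne_two (by omega)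
      have h2 : Odd q := hq.odd_of_ne_two (by omega)
      have h3' : Odd (3*p*q) := by
        rw [Nat.odd_mul, Nat.odd_mul]
        exact ⟨⟨by decide, h1⟩, h2⟩
      intro hdvd
      obtain ⟨k, hk⟩ := h3'
      omega
    have := odd_norm_one2 ((3*p*q : ℕ) : ℤ) hodd
    rw [hc_def]; exact_mod_cast this
  have hX1 : ‖X/w‖ ≤ 1 := by
    rw [norm_div]; exact div_le_one_of_le₀ hXw (norm_nonneg _)
  have hY1 : ‖Y/w‖ ≤ 1 := by
    rw [norm_div]; exact div_le_one_of_le₀ hYw (norm_nonneg _)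
  have hZ1 : ‖Z/w‖ ≤ 1 := by
    rw [norm_div]; exact div_le_one_of_le₀ hZw (norm_nonneg _)
  set x : ℤ_[2] := ⟨X/w, hX1⟩ with hx_def
  set y : ℤ_[2] := ⟨Y/w, hY1⟩ with hy_def
  set z : ℤ_[2] := ⟨Z/w, hZ1⟩ with hz_def
  have hww : ‖w/w‖ = 1 := by rw [div_self hw0, norm_one]
  have hmax : ‖x‖ = 1 ∨ ‖y‖ = 1 ∨ ‖z‖ = 1 := by
    rcases hw_eq with h | h | h
    · left; show ‖X/w‖ = 1; rw [← h]; exact hww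
    · right; left; show ‖Y/w‖ = 1; rw [← h]; exact hww
    · right; right; show ‖Z/w‖ = 1; rw [← h]; exact hww
  have key2 : (X/w)^3 - 3*(X/w)^2*(Y/w) - 9*(X/w)*(Y/w)^2 + 3*(Y/w)^3
      + 2*((3*p*q : ℕ) : ℚ_[2])*(Z/w)^3 = 0 := by
    have hw3 : w^3 ≠ 0 := pow_ne_zero _ hw0
    push_cast
    linear_combination (w⁻¹)^3 * heq
  have hEQ : x^3 - 3*x^2*y - 9*x*y^2 + 3*y^3 + 2*c*z^3 = 0 := by
    have : ((x^3 - 3*x^2*y - 9*x*y^2 + 3*y^3 + 2*c*z^3 : ℤ_[2]) : ℚ_[2]) = 0 := by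
      push_cast
      exact key2
    exact PadicInt.coe_eq_zero.1 this
  exact key2adic c x y z hc hmax hEQ
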